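/- Let n > 2k, 1 ≤ p ≤ k, and B_p(n,k) = {A ⊆ {1,...,n} : |A| = k, |A ∩ [2p−1]| ≥ p} where [2p−1] = {1,...,2p−1}. Then |I(B_p(n,k))| = Σ_{i=1}^{p−1} C(2p−1, i) Σ_{j=0}^{k−p} C(n−2p+1, j) + Σ_{i=p}^{2p−1} C(2p−1, i) Σ_{j=0}^{k−i−1} C(n−2p+1, j), where I(F) denotes the family of distinct intersections F ∩ F' over distinct members F, F'. -/

import Mathlib

open Finset

/-- A family of finite sets is intersecting if any two members meet. -/
def Intersecting (F : Finset (Finset ℕ)) : Prop :=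
  ∀ A ∈ F, ∀ B ∈ F, (A ∩ B).Nonempty

/-- `T` is a transversal of `F` inside `{1,…,n}` of size at most `k`. -/
def Transversal (n k : ℕ) (F : Finset (Finset ℕ)) (T : Finset ℕ) : Prop :=
  T ⊆ Finset.Icc 1 n ∧ T.card ≤ k ∧ ∀ A ∈ F, (T ∩ A).Nonempty

/-- `B` is an inclusion-minimal transversal of `F`. -/
def MinTrans (n k : ℕ) (F : Finset (Finset ℕ)) (B : Finset ℕ) : Prop :=
  Transversal n k F B ∧ ∀ T, Transversal n k F T → T ⊆ B → T = B

/-- `F` is a saturated intersecting family of `k`-subsets of `{1,…,n}`. -/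
def Saturated (n k : ℕ) (F : Finset (Finset ℕ)) : Prop :=
  Intersecting F ∧
    ∀ G ∈ (Finset.Icc 1 n).powersetCard k, G ∉ F → ¬ Intersecting (insert G F)

/-- The family of distinct pairwise intersections of distinct members of `F`. -/
def interFam (F : Finset (Finset ℕ)) : Finset (Finset ℕ) :=
  ((F ×ˢ F).filter fun p => p.1 ≠ p.2).image fun p => p.1 ∩ p.2


def condIJ (p k i j : ℕ) : Prop := 1 ≤ i ∧ (i < p → j ≤ k - p) ∧ (p ≤ i → i + j < k)

instance (p k i j : ℕ) : Decidable (condIJ p k i j) := by unfold condIJ; infer_instance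

-- the intersection-shape helper
lemma inter_union_eq_self {S U V U' V' : Finset ℕ}
    (hUU' : Disjoint U U') (hVV' : Disjoint V V')
    (hUV' : Disjoint U V') (hVU' : Disjoint V U') :
    (S ∪ U ∪ V) ∩ (S ∪ U' ∪ V') = S := by
  apply subset_antisymm
  · intro x hx
    simp only [mem_inter, mem_union] at hx
    obtain ⟨h1, h2⟩ := hx
    by_contra hxS
    rcases h1 with (h | h) | h
    · exact hxS h
    · rcases h2 with (h' | h') | h'
      · exact hxS h'
      · exact hUU'.forall_ne_finset h h' rfl
      · exact hUV'.forall_ne_finset h h' rfl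
    · rcases h2 with (h' | h') | h'
      · exact hxS h'
      · exact hVU'.forall_ne_finset h h' rfl
      · exact hVV'.forall_ne_finset h h' rfl
  · intro x hx
    simp only [mem_inter, mem_union]
    exact ⟨Or.inl (Or.inl hx), Or.inl (Or.inl hx)⟩

lemma interFam_eq (n k p : ℕ) (hp1 : 1 ≤ p) (hpk : p ≤ k) (hn : 2 * k < n) :
    interFam (((Finset.Icc 1 n).powersetCard k).filter
        (fun A => p ≤ (A ∩ Finset.Icc 1 (2 * p - 1)).card)) =
      (Finset.Icc 1 n).powerset.filter
        (fun S => condIJ p k (S ∩ Finset.Icc 1 (2 * p - 1)).card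
          (S \ Finset.Icc 1 (2 * p - 1)).card) := by
  set W : Finset ℕ := Finset.Icc 1 (2 * p - 1) with hW
  set Ω : Finset ℕ := Finset.Icc 1 n with hΩ
  set O : Finset ℕ := Ω \ W with hO
  have hcardW : W.card = 2 * p - 1 := by simp [hW]
  have hcardΩ : Ω.card = n := by simp [hΩ]
  have hWΩ : W ⊆ Ω := by
    intro x hx
    simp only [hW, hΩ, Finset.mem_Icc] at hx ⊢
    omega
  have hcardO : O.card = n - 2 * p + 1 := by
    rw [hO, card_sdiff_of_subset hWΩ, hcardW, hcardΩ]; omega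
  have hOW : Disjoint O W := sdiff_disjoint
  set B := ((Ω.powersetCard k).filter (fun A => p ≤ (A ∩ W).card)) with hB
  have hmemB : ∀ A, A ∈ B ↔ A ⊆ Ω ∧ A.card = k ∧ p ≤ (A ∩ W).card := by
    intro A
    simp only [hB, Finset.mem_filter, Finset.mem_powersetCard]
    tauto
  have hmemI : ∀ S, S ∈ interFam B ↔
      ∃ A A', A ∈ B ∧ A' ∈ B ∧ A ≠ A' ∧ A ∩ A' = S := by
    intro S
    simp only [interFam, Finset.mem_image, Finset.mem_filter, Finset.mem_product, Prod.exists]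
    constructor
    · rintro ⟨a, b, ⟨⟨ha, hb⟩, hne⟩, heq⟩; exact ⟨a, b, ha, hb, hne, heq⟩
    · rintro ⟨a, b, ha, hb, hne, heq⟩; exact ⟨a, b, ⟨⟨ha, hb⟩, hne⟩, heq⟩
  ext S
  rw [hmemI, Finset.mem_filter, Finset.mem_powerset]
  constructor
  · rintro ⟨A, A', hA, hA', hne, rfl⟩
    rw [hmemB] at hA hA'
    obtain ⟨hAΩ, hAk, hAp⟩ := hA
    obtain ⟨hA'Ω, hA'k, hA'p⟩ := hA'
    set S := A ∩ A' with hS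
    have hSA : S ⊆ A := inter_subset_left
    have hSΩ : S ⊆ Ω := hSA.trans hAΩ
    -- S ≠ A
    have hSneA : S ≠ A := by
      intro h
      apply hne
      have hAsub : A ⊆ A' := by
        intro x hx
        have : x ∈ S := h ▸ hx
        exact (mem_inter.1 this).2
      exact eq_of_subset_of_card_le hAsub (by omega)
    have hScard : S.card < k := by
      rw [← hAk]
      exact card_lt_card (ssubset_of_subset_of_ne hSA hSneA)
    -- 1 ≤ (S ∩ W).card
    have hSW : S ∩ W = (A ∩ W) ∩ (A' ∩ W) := by
      ext x; simp only [mem_inter, hS]; tauto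
    have hne1 : 0 < (S ∩ W).card := by
      rw [hSW]
      apply card_pos.2
      apply inter_nonempty_of_card_lt_card_add_card inter_subset_right inter_subset_right
      omega
    -- sdiff card bound
    have hsub2 : S \ W ⊆ A \ W := sdiff_subset_sdiff hSA Subset.rfl
    have h4 : (A ∩ W).card + (A \ W).card = A.card := card_inter_add_card_sdiff A W
    have h5 : (S \ W).card ≤ (A \ W).card := card_le_card hsub2
    have h6 : (S ∩ W).card + (S \ W).card = S.card := card_inter_add_card_sdiff S W
    refine ⟨hSΩ, ?_, ?_, ?_⟩ <;> omega
  · rintro ⟨hSΩ, hc1, hc2, hc3⟩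
    have hScard : (S ∩ W).card + (S \ W).card = S.card := card_inter_add_card_sdiff S W
    set i := (S ∩ W).card with hi
    set j := (S \ W).card with hj
    have hiW : i ≤ 2 * p - 1 := hcardW ▸ card_le_card inter_subset_right
    have hWSc : (W \ S).card + (W ∩ S).card = W.card := card_sdiff_add_card_inter W S
    have hWSi : (W ∩ S).card = i := by rw [inter_comm]
    have hOSc : (O \ S).card + (O ∩ S).card = O.card := card_sdiff_add_card_inter O S
    have hOSj : O ∩ S = S \ W := by
      ext x
      simp only [hO, mem_inter, mem_sdiff]
      constructor
      · rintro ⟨⟨h1, h2⟩, h3⟩; exact ⟨h3, h2⟩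
      · rintro ⟨h3, h2⟩; exact ⟨⟨hSΩ h3, h2⟩, h3⟩
    have hOSj' : (O ∩ S).card = j := by rw [hOSj]
    -- sizes
    set u := p - i with hu
    set v := k - (i + j + u) with hv
    have hij : i + j < k := by omega
    have hupick : u + u ≤ (W \ S).card := by omega
    have hvpick : v + v ≤ (O \ S).card := by omega
    obtain ⟨U, hUsub, hUcard⟩ := exists_subset_card_eq (show u ≤ (W \ S).card by omega)
    obtain ⟨U', hU'sub, hU'card⟩ := exists_subset_card_eq
      (show u ≤ ((W \ S) \ U).card by rw [card_sdiff_of_subset hUsub]; omega)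
    obtain ⟨V, hVsub, hVcard⟩ := exists_subset_card_eq (show v ≤ (O \ S).card by omega)
    obtain ⟨V', hV'sub, hV'card⟩ := exists_subset_card_eq
      (show v ≤ ((O \ S) \ V).card by rw [card_sdiff_of_subset hVsub]; omega)
    have hU'sub2 : U' ⊆ W \ S := hU'sub.trans sdiff_subset
    have hV'sub2 : V' ⊆ O \ S := hV'sub.trans sdiff_subset
    -- disjointness facts
    have hUW : U ⊆ W := hUsub.trans sdiff_subset
    have hU'W : U' ⊆ W := hU'sub2.trans sdiff_subset
    have hVO : V ⊆ O := hVsub.trans sdiff_subset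
    have hV'O : V' ⊆ O := hV'sub2.trans sdiff_subset
    have hd' : ∀ {X T T2 : Finset ℕ}, T2 ⊆ X \ T → Disjoint T T2 :=
      fun h => disjoint_right.2 fun _x hx => (mem_sdiff.1 (h hx)).2
    have hdSU : Disjoint S U := hd' hUsub
    have hdSU' : Disjoint S U' := hd' hU'sub2
    have hdSV : Disjoint S V := hd' hVsub
    have hdSV' : Disjoint S V' := hd' hV'sub2
    have hdUU' : Disjoint U U' := hd' hU'sub
    have hdVV' : Disjoint V V' := hd' hV'sub
    have hdUV : Disjoint U V := (hOW.mono hVO hUW).symm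
    have hdUV' : Disjoint U V' := (hOW.mono hV'O hUW).symm
    have hdVU' : Disjoint V U' := hOW.mono hVO hU'W
    have hdU'V' : Disjoint U' V' := (hOW.mono hV'O hU'W).symm
    set A := S ∪ U ∪ V with hA
    set A' := S ∪ U' ∪ V' with hA'
    have hAcard : A.card = k := by
      rw [hA, card_union_of_disjoint, card_union_of_disjoint hdSU]
      · omega
      · exact disjoint_union_left.2 ⟨hdSV, hdUV⟩
    have hA'card : A'.card = k := by
      rw [hA', card_union_of_disjoint, card_union_of_disjoint hdSU']
      · omega
      · exact disjoint_union_left.2 ⟨hdSV', hdU'V'⟩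
    have hinter : A ∩ A' = S := inter_union_eq_self hdUU' hdVV' hdUV' hdVU'
    have hAW : ∀ T T2, T ⊆ W \ S → T2 ⊆ O → p ≤ ((S ∪ T ∪ T2) ∩ W).card → True := fun _ _ _ _ _ => trivial
    have hAp : ∀ (T T2 : Finset ℕ), T ⊆ W \ S → T2 ⊆ O → T.card = u →
        p ≤ ((S ∪ T ∪ T2) ∩ W).card := by
      intro T T2 hT hT2 hTc
      have hsub : (S ∩ W) ∪ T ⊆ (S ∪ T ∪ T2) ∩ W := by
        intro x hx
        rcases mem_union.1 hx with h | h
        · exact mem_inter.2 ⟨mem_union.2 (Or.inl (mem_union.2 (Or.inl (mem_inter.1 h).1))),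
            (mem_inter.1 h).2⟩
        · exact mem_inter.2 ⟨mem_union.2 (Or.inl (mem_union.2 (Or.inr h))),
            (hT.trans sdiff_subset) h⟩
      have hd : Disjoint (S ∩ W) T := (hd' hT).mono_left inter_subset_left
      have := card_le_card hsub
      rw [card_union_of_disjoint hd, hTc] at this
      omega
    have hAsub : A ⊆ Ω := by
      rw [hA]
      exact union_subset (union_subset hSΩ (hUW.trans hWΩ)) (hVO.trans sdiff_subset)
    have hA'sub : A' ⊆ Ω := by
      rw [hA']
      exact union_subset (union_subset hSΩ (hU'W.trans hWΩ)) (hV'O.trans sdiff_subset)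
    refine ⟨A, A', ?_, ?_, ?_, hinter⟩
    · exact (hmemB A).2 ⟨hAsub, hAcard, hAp U V hUsub hVO hUcard⟩
    · exact (hmemB A').2 ⟨hA'sub, hA'card, hAp U' V' hU'sub2 hV'O hU'card⟩
    · intro h
      rw [h, inter_self] at hinter
      rw [hinter] at hA'card
      omega

lemma count_eq (n k p : ℕ) (hp1 : 1 ≤ p) (hpk : p ≤ k) (hn : 2 * k < n) :
    ((Finset.Icc 1 n).powerset.filter
        (fun S => condIJ p k (S ∩ Finset.Icc 1 (2 * p - 1)).card
          (S \ Finset.Icc 1 (2 * p - 1)).card)).card =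
      (∑ i ∈ Finset.Icc 1 (p - 1), (2 * p - 1).choose i *
          ∑ j ∈ Finset.range (k - p + 1), (n - 2 * p + 1).choose j) +
      ∑ i ∈ Finset.Icc p (2 * p - 1), (2 * p - 1).choose i *
          ∑ j ∈ Finset.range (k - i), (n - 2 * p + 1).choose j := by
  set W : Finset ℕ := Finset.Icc 1 (2 * p - 1) with hW
  set Ω : Finset ℕ := Finset.Icc 1 n with hΩ
  set O : Finset ℕ := Ω \ W with hO
  have hcardW : W.card = 2 * p - 1 := by simp [hW]
  have hcardΩ : Ω.card = n := by simp [hΩ]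
  have hWΩ : W ⊆ Ω := by
    intro x hx
    simp only [hW, hΩ, Finset.mem_Icc] at hx ⊢
    omega
  have hcardO : O.card = n - 2 * p + 1 := by
    rw [hO, card_sdiff_of_subset hWΩ, hcardW, hcardΩ]; omega
  have hOW : Disjoint O W := sdiff_disjoint
  -- bijection with pairs
  have hbij : (Ω.powerset.filter
        (fun S => condIJ p k (S ∩ W).card (S \ W).card)).card =
      ((W.powerset ×ˢ O.powerset).filter
        (fun q => condIJ p k q.1.card q.2.card)).card := by
    apply card_nbij' (fun S => (S ∩ W, S \ W)) (fun q => q.1 ∪ q.2)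
    · intro S hS
      simp only [Finset.mem_coe, Finset.mem_filter, Finset.mem_powerset, Finset.mem_product] at hS ⊢
      obtain ⟨hSΩ, hcond⟩ := hS
      refine ⟨⟨inter_subset_right, ?_⟩, hcond⟩
      intro x hx
      exact mem_sdiff.2 ⟨hSΩ (mem_sdiff.1 hx).1, (mem_sdiff.1 hx).2⟩
    · intro q hq
      simp only [Finset.mem_coe, Finset.mem_filter, Finset.mem_powerset, Finset.mem_product] at hq ⊢
      obtain ⟨⟨h1, h2⟩, hcond⟩ := hq
      have ha : (q.1 ∪ q.2) ∩ W = q.1 := by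
        rw [union_inter_distrib_right, (inter_eq_left).2 h1,
          (disjoint_iff_inter_eq_empty.1 (hOW.mono_left h2)), union_empty]
      have hb : (q.1 ∪ q.2) \ W = q.2 := by
        rw [union_sdiff_distrib, sdiff_eq_empty_iff_subset.2 h1, empty_union,
          sdiff_eq_self_of_disjoint (hOW.mono_left h2)]
      refine ⟨union_subset (h1.trans hWΩ) (h2.trans sdiff_subset), ?_⟩
      rw [ha, hb]; exact hcond
    · intro S hS
      simp only [Finset.mem_coe, Finset.mem_filter, Finset.mem_powerset] at hS
      dsimp only
      rw [union_comm]; exact sdiff_union_inter S W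
    · intro q hq
      simp only [Finset.mem_coe, Finset.mem_filter, Finset.mem_powerset, Finset.mem_product] at hq
      obtain ⟨⟨h1, h2⟩, _⟩ := hq
      have ha : (q.1 ∪ q.2) ∩ W = q.1 := by
        rw [union_inter_distrib_right, (inter_eq_left).2 h1,
          (disjoint_iff_inter_eq_empty.1 (hOW.mono_left h2)), union_empty]
      have hb : (q.1 ∪ q.2) \ W = q.2 := by
        rw [union_sdiff_distrib, sdiff_eq_empty_iff_subset.2 h1, empty_union,
          sdiff_eq_self_of_disjoint (hOW.mono_left h2)]
      dsimp only
      rw [ha, hb]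
  rw [hbij]
  -- expand as a double sum
  have hsum : ((W.powerset ×ˢ O.powerset).filter
        (fun q => condIJ p k q.1.card q.2.card)).card =
      ∑ i ∈ Finset.range (W.card + 1), W.card.choose i *
        ∑ j ∈ Finset.range (O.card + 1), O.card.choose j *
          (if condIJ p k i j then 1 else 0) := by
    rw [Finset.card_filter, Finset.sum_product]
    rw [Finset.sum_powerset_apply_card
      (fun i => ∑ b ∈ O.powerset, if condIJ p k i b.card then 1 else 0)]
    apply Finset.sum_congr rfl
    intro i _
    rw [smul_eq_mul]
    congr 1
    rw [Finset.sum_powerset_apply_card (fun j => if condIJ p k i j then 1 else 0)]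
    apply Finset.sum_congr rfl
    intro j _
    rw [smul_eq_mul]
  rw [hsum, hcardW, hcardO]
  set N := n - 2 * p + 1 with hN
  set M := 2 * p - 1 with hM
  have hJ1 : ∀ i, 1 ≤ i → i < p →
      (∑ j ∈ Finset.range (N + 1), N.choose j * (if condIJ p k i j then 1 else 0)) =
        ∑ j ∈ Finset.range (k - p + 1), N.choose j := by
    intro i h1 h2
    simp only [mul_ite, mul_one, mul_zero]
    rw [← Finset.sum_filter]
    apply Finset.sum_congr ?_ (fun _ _ => rfl)
    ext j
    simp only [Finset.mem_filter]
    simp only [Finset.mem_filter, Finset.mem_range, condIJ]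
    omega
  have hJ2 : ∀ i, p ≤ i →
      (∑ j ∈ Finset.range (N + 1), N.choose j * (if condIJ p k i j then 1 else 0)) =
        ∑ j ∈ Finset.range (k - i), N.choose j := by
    intro i h1
    simp only [mul_ite, mul_one, mul_zero]
    rw [← Finset.sum_filter]
    apply Finset.sum_congr ?_ (fun _ _ => rfl)
    ext j
    simp only [Finset.mem_filter]
    simp only [Finset.mem_filter, Finset.mem_range, condIJ]
    omega
  have hsplit : ∀ i ∈ Finset.range (M + 1),
      (M.choose i * ∑ j ∈ Finset.range (N + 1), N.choose j * (if condIJ p k i j then 1 else 0)) =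
      ((if 1 ≤ i ∧ i < p then M.choose i * ∑ j ∈ Finset.range (k - p + 1), N.choose j else 0) +
       (if p ≤ i then M.choose i * ∑ j ∈ Finset.range (k - i), N.choose j else 0)) := by
    intro i _
    by_cases h1 : p ≤ i
    · rw [hJ2 i h1, if_neg (by omega), if_pos h1, zero_add]
    · by_cases h0 : 1 ≤ i
      · rw [hJ1 i h0 (by omega), if_pos ⟨h0, by omega⟩, if_neg h1, add_zero]
      · have hi0 : i = 0 := by omega
        subst hi0
        rw [if_neg (by omega), if_neg h1, add_zero]
        rw [Finset.sum_eq_zero, mul_zero]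
        intro j _
        rw [if_neg, mul_zero]
        simp [condIJ]
  rw [Finset.sum_congr rfl hsplit, Finset.sum_add_distrib]
  congr 1
  · rw [← Finset.sum_filter]
    apply Finset.sum_congr ?_ (fun _ _ => rfl)
    ext i
    simp only [Finset.mem_filter, Finset.mem_range, Finset.mem_Icc]
    omega
  · rw [← Finset.sum_filter]
    apply Finset.sum_congr ?_ (fun _ _ => rfl)
    ext i
    simp only [Finset.mem_filter, Finset.mem_range, Finset.mem_Icc]
    omega

theorem stmt_17 (n k p : ℕ) (hp1 : 1 ≤ p) (hpk : p ≤ k) (hn : 2 * k < n) :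
    (interFam (((Finset.Icc 1 n).powersetCard k).filter
        (fun A => p ≤ (A ∩ Finset.Icc 1 (2 * p - 1)).card))).card =
      (∑ i ∈ Finset.Icc 1 (p - 1), (2 * p - 1).choose i *
          ∑ j ∈ Finset.range (k - p + 1), (n - 2 * p + 1).choose j) +
      ∑ i ∈ Finset.Icc p (2 * p - 1), (2 * p - 1).choose i *
          ∑ j ∈ Finset.range (k - i), (n - 2 * p + 1).choose j := by
  rw [interFam_eq n k p hp1 hpk hn]
  exact count_eq n k p hp1 hpk hn
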